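/- arXiv:2102.05413 — 4 statements merged into one kernel-verified Lean document; each statement's English description precedes it below -/
import Mathlib

section
/- With notation as before: for every λ > 0, 0 ≤ d_W - de_S ≤ (1/λ) H(π^S) ≤ (1/λ) H(p · p̃ᵀ), where de_S = d_S - (1/λ)H(π^S) and H(p·p̃ᵀ) is the entropy of the product coupling with entries p_i p̃_j. -/
/-- A transport plan with marginals `p` and `pt`. -/
def IsPlan {n m : ℕ} (p : Fin n → ℝ) (pt : Fin m → ℝ) (π : Fin n → Fin m → ℝ) : Prop :=
  (∀ i j, 0 ≤ π i j) ∧ (∀ i, ∑ j, π i j = p i) ∧ (∀ j, ∑ i, π i j = pt j)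

/-- Transport cost. -/
def cost {n m : ℕ} (d π : Fin n → Fin m → ℝ) : ℝ := ∑ i, ∑ j, π i j * d i j

/-- Entropy of a plan (with `0 * log 0 = 0`, as `Real.log 0 = 0`). -/
noncomputable def ent {n m : ℕ} (π : Fin n → Fin m → ℝ) : ℝ :=
  -∑ i, ∑ j, π i j * Real.log (π i j)

lemma plan_le_row {n m : ℕ} {p : Fin n → ℝ} {pt : Fin m → ℝ} {π : Fin n → Fin m → ℝ}
    (h : IsPlan p pt π) (i : Fin n) (j : Fin m) : π i j ≤ p i := by
  rw [← h.2.1 i]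
  exact Finset.single_le_sum (fun j _ => h.1 i j) (Finset.mem_univ j)

lemma plan_le_col {n m : ℕ} {p : Fin n → ℝ} {pt : Fin m → ℝ} {π : Fin n → Fin m → ℝ}
    (h : IsPlan p pt π) (i : Fin n) (j : Fin m) : π i j ≤ pt j := by
  rw [← h.2.2 j]
  exact Finset.single_le_sum (fun i _ => h.1 i j) (Finset.mem_univ i)

lemma ent_nonneg_of_plan {n m : ℕ} {p : Fin n → ℝ} {pt : Fin m → ℝ} {π : Fin n → Fin m → ℝ}
    (hp : ∀ i, 0 ≤ p i) (hps : ∑ i, p i = 1)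
    (h : IsPlan p pt π) : 0 ≤ ent π := by
  have h1 : ∀ i j, π i j ≤ 1 := by
    intro i j
    calc π i j ≤ p i := plan_le_row h i j
    _ ≤ ∑ i, p i := Finset.single_le_sum (fun i _ => hp i) (Finset.mem_univ i)
    _ = 1 := hps
  have : ∑ i, ∑ j, π i j * Real.log (π i j) ≤ 0 := by
    apply Finset.sum_nonpos; intro i _
    apply Finset.sum_nonpos; intro j _
    exact mul_nonpos_of_nonneg_of_nonpos (h.1 i j) (Real.log_nonpos (h.1 i j) (h1 i j))
  simp only [ent]; linarith

/-- Gibbs: entropy of any coupling is at most that of the product coupling. -/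
lemma ent_le_ent_prod {n m : ℕ} {p : Fin n → ℝ} {pt : Fin m → ℝ} {π : Fin n → Fin m → ℝ}
    (hp : ∀ i, 0 ≤ p i) (hps : ∑ i, p i = 1)
    (hpt : ∀ j, 0 ≤ pt j) (hpts : ∑ j, pt j = 1)
    (h : IsPlan p pt π) : ent π ≤ ent (fun i j => p i * pt j) := by
  -- pointwise Gibbs inequality
  have key : ∀ i j, π i j * Real.log (p i * pt j)
      ≤ π i j * Real.log (π i j) + p i * pt j - π i j := by
    intro i j
    rcases eq_or_lt_of_le (h.1 i j) with h0 | h0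
    · rw [← h0]; simpa using mul_nonneg (hp i) (hpt j)
    · have hpi : 0 < p i := lt_of_lt_of_le h0 (plan_le_row h i j)
      have hptj : 0 < pt j := lt_of_lt_of_le h0 (plan_le_col h i j)
      have hb : 0 < p i * pt j := mul_pos hpi hptj
      have hlog := Real.log_le_sub_one_of_pos (div_pos hb h0)
      rw [Real.log_div hb.ne' h0.ne'] at hlog
      have h2 : π i j * (Real.log (p i * pt j) - Real.log (π i j))
          ≤ π i j * (p i * pt j / π i j - 1) := mul_le_mul_of_nonneg_left hlog h0.le
      have h3 : π i j * (p i * pt j / π i j - 1) = p i * pt j - π i j := by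
        field_simp
      nlinarith [h2, h3]
  -- sums of the correction terms
  have hsum_pp : ∑ i, ∑ j, p i * pt j = 1 := by
    simp_rw [← Finset.mul_sum, hpts, mul_one, hps]
  have hsum_pi : ∑ i, ∑ j, π i j = 1 := by
    simp_rw [h.2.1, hps]
  have hA : ∑ i, ∑ j, π i j * Real.log (p i * pt j)
      ≤ ∑ i, ∑ j, π i j * Real.log (π i j) := by
    have := Finset.sum_le_sum (fun i (_ : i ∈ Finset.univ) =>
      Finset.sum_le_sum (fun j (_ : j ∈ Finset.univ) => key i j))
    simp_rw [Finset.sum_sub_distrib, Finset.sum_add_distrib] at this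
    linarith [this, hsum_pp, hsum_pi]
  -- both cross-entropies equal the sum of marginal entropies
  have split1 : ∑ i, ∑ j, π i j * Real.log (p i * pt j)
      = (∑ i, p i * Real.log (p i)) + ∑ j, pt j * Real.log (pt j) := by
    have hpt1 : ∀ i j, π i j * Real.log (p i * pt j)
        = π i j * Real.log (p i) + π i j * Real.log (pt j) := by
      intro i j
      rcases eq_or_lt_of_le (h.1 i j) with h0 | h0
      · rw [← h0]; ring
      · have hpi : 0 < p i := lt_of_lt_of_le h0 (plan_le_row h i j)
        have hptj : 0 < pt j := lt_of_lt_of_le h0 (plan_le_col h i j)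
        rw [Real.log_mul hpi.ne' hptj.ne']; ring
    simp_rw [hpt1, Finset.sum_add_distrib]
    congr 1
    · simp_rw [← Finset.sum_mul, h.2.1]
    · rw [Finset.sum_comm]
      simp_rw [← Finset.sum_mul, h.2.2]
  have split2 : ∑ i, ∑ j, (p i * pt j) * Real.log (p i * pt j)
      = (∑ i, p i * Real.log (p i)) + ∑ j, pt j * Real.log (pt j) := by
    have hpt1 : ∀ i j, (p i * pt j) * Real.log (p i * pt j)
        = pt j * (p i * Real.log (p i)) + p i * (pt j * Real.log (pt j)) := by
      intro i j
      rcases eq_or_ne (p i) 0 with h0 | h0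
      · simp [h0]
      rcases eq_or_ne (pt j) 0 with h1 | h1
      · simp [h1]
      rw [Real.log_mul h0 h1]; ring
    simp_rw [hpt1, Finset.sum_add_distrib]
    congr 1
    · simp_rw [← Finset.sum_mul, hpts, one_mul]
    · simp_rw [← Finset.mul_sum]
      rw [← Finset.sum_mul, hps, one_mul]
  simp only [ent]
  linarith [hA, split1, split2]

theorem wasserstein_vs_entropic_sinkhorn {n m : ℕ}
    (d : Fin n → Fin m → ℝ) (p : Fin n → ℝ) (pt : Fin m → ℝ)
    (hp : ∀ i, 0 ≤ p i) (hps : ∑ i, p i = 1)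
    (hpt : ∀ j, 0 ≤ pt j) (hpts : ∑ j, pt j = 1)
    (lam : ℝ) (hlam : 0 < lam)
    (πW πS : Fin n → Fin m → ℝ)
    (hW : IsPlan p pt πW) (hWopt : ∀ π, IsPlan p pt π → cost d πW ≤ cost d π)
    (hS : IsPlan p pt πS)
    (hSopt : ∀ π, IsPlan p pt π →
      cost d πS - (1/lam) * ent πS ≤ cost d π - (1/lam) * ent π) :
    0 ≤ cost d πW - (cost d πS - (1/lam) * ent πS) ∧
    cost d πW - (cost d πS - (1/lam) * ent πS) ≤ (1/lam) * ent πS ∧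
    (1/lam) * ent πS ≤ (1/lam) * ent (fun i j => p i * pt j) := by
  have hc : 0 ≤ 1/lam := by positivity
  have hWent : 0 ≤ ent πW := ent_nonneg_of_plan hp hps hW
  have h1 := hSopt πW hW
  have h2 := hWopt πS hS
  have h3 := ent_le_ent_prod hp hps hpt hpts hS
  refine ⟨?_, ?_, ?_⟩
  · nlinarith [mul_nonneg hc hWent]
  · linarith
  · exact mul_le_mul_of_nonneg_left h3 hc
end

section
/- If π^*_{ij} = exp(-λ(d_{ij} - β_i - γ_j) - 1) for some vectors β ∈ ℝ^n, γ ∈ ℝ^m, and π^* is a transport plan with marginals p and p̃ (strictly positive probability vectors), then π^* is the unique minimizer of ∑_{i,j} π_{ij} d_{ij} + (1/λ)∑_{i,j} π_{ij} log π_{ij} over all transport plans with these marginals. -/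
lemma pw_le (a b : ℝ) (ha : 0 ≤ a) (hb : 0 < b) :
    a - b ≤ a * Real.log a - a * Real.log b := by
  rcases eq_or_lt_of_le ha with h | h
  · simp [← h]; linarith
  · have hx : 0 < b / a := div_pos hb h
    have h1 := Real.log_le_sub_one_of_pos hx
    rw [Real.log_div hb.ne' h.ne'] at h1
    have h2 := mul_le_mul_of_nonneg_left h1 h.le
    have h3 : a * (b / a - 1) = b - a := by field_simp
    rw [h3, mul_sub] at h2
    linarith

lemma pw_lt (a b : ℝ) (ha : 0 ≤ a) (hb : 0 < b) (hne : a ≠ b) :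
    a - b < a * Real.log a - a * Real.log b := by
  rcases eq_or_lt_of_le ha with h | h
  · simp [← h]; linarith
  · have hx : 0 < b / a := div_pos hb h
    have hx1 : b / a ≠ 1 := fun h' => hne ((div_eq_one_iff_eq h.ne').mp h').symm
    have h1 := Real.log_lt_sub_one_of_pos hx hx1
    rw [Real.log_div hb.ne' h.ne'] at h1
    have h2 := mul_lt_mul_of_pos_left h1 h
    have h3 : a * (b / a - 1) = b - a := by field_simp
    rw [h3, mul_sub] at h2
    linarith

lemma key_identity {n m : ℕ} (d : Fin n → Fin m → ℝ) (p : Fin n → ℝ) (pt : Fin m → ℝ)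
    (lam : ℝ) (hlam : lam ≠ 0) (β : Fin n → ℝ) (γ : Fin m → ℝ)
    (πstar : Fin n → Fin m → ℝ)
    (hform : ∀ i j, πstar i j = Real.exp (-lam * (d i j - β i - γ j) - 1))
    (hps : ∑ i, p i = 1)
    (π : Fin n → Fin m → ℝ) (hπ : IsPlan p pt π) :
    cost d π + (1/lam) * ∑ i, ∑ j, π i j * Real.log (π i j)
      = (∑ i, β i * p i + ∑ j, γ j * pt j - 1/lam)
        + (1/lam) * ∑ i, ∑ j, (π i j * Real.log (π i j) - π i j * Real.log (πstar i j)) := by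
  obtain ⟨hpos, hrow, hcol⟩ := hπ
  have hlog : ∀ i j, Real.log (πstar i j) = -lam * (d i j - β i - γ j) - 1 := by
    intro i j; rw [hform]; exact Real.log_exp _
  have hsum1 : ∑ i, ∑ j, π i j * β i = ∑ i, β i * p i := by
    refine Finset.sum_congr rfl fun i _ => ?_
    rw [← Finset.sum_mul, hrow, mul_comm]
  have hsum2 : ∑ i, ∑ j, π i j * γ j = ∑ j, γ j * pt j := by
    rw [Finset.sum_comm]
    refine Finset.sum_congr rfl fun j _ => ?_
    rw [← Finset.sum_mul, hcol, mul_comm]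
  have hsum3 : ∑ i, ∑ j, π i j = 1 := by
    rw [Finset.sum_congr rfl fun i _ => hrow i, hps]
  have expand : ∀ i j, π i j * Real.log (π i j) - π i j * Real.log (πstar i j)
      = π i j * Real.log (π i j) + lam * (π i j * d i j) - lam * (π i j * β i)
        - lam * (π i j * γ j) + π i j := by
    intro i j; rw [hlog]; ring
  have hmain : ∑ i, ∑ j, (π i j * Real.log (π i j) - π i j * Real.log (πstar i j))
      = (∑ i, ∑ j, π i j * Real.log (π i j)) + lam * cost d π
        - lam * (∑ i, β i * p i) - lam * (∑ j, γ j * pt j) + 1 := by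
    rw [← hsum1, ← hsum2, ← hsum3]
    unfold cost
    simp only [Finset.mul_sum, ← Finset.sum_add_distrib, ← Finset.sum_sub_distrib]
    exact Finset.sum_congr rfl fun i _ => Finset.sum_congr rfl fun j _ => expand i j
  rw [hmain]
  field_simp
  ring

theorem gibbs_form_is_unique_minimizer {n m : ℕ}
    (d : Fin n → Fin m → ℝ) (p : Fin n → ℝ) (pt : Fin m → ℝ)
    (hp : ∀ i, 0 < p i) (hps : ∑ i, p i = 1)
    (hpt : ∀ j, 0 < pt j) (hpts : ∑ j, pt j = 1)
    (lam : ℝ) (hlam : 0 < lam)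
    (β : Fin n → ℝ) (γ : Fin m → ℝ)
    (πstar : Fin n → Fin m → ℝ)
    (hform : ∀ i j, πstar i j = Real.exp (-lam * (d i j - β i - γ j) - 1))
    (hplan : IsPlan p pt πstar) :
    (∀ π, IsPlan p pt π →
      cost d πstar + (1/lam) * ∑ i, ∑ j, πstar i j * Real.log (πstar i j)
        ≤ cost d π + (1/lam) * ∑ i, ∑ j, π i j * Real.log (π i j)) ∧
    (∀ π, IsPlan p pt π →
      (∀ π', IsPlan p pt π' →
        cost d π + (1/lam) * ∑ i, ∑ j, π i j * Real.log (π i j)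
          ≤ cost d π' + (1/lam) * ∑ i, ∑ j, π' i j * Real.log (π' i j)) →
      π = πstar) := by
  have hspos : ∀ i j, 0 < πstar i j := fun i j => by rw [hform]; exact Real.exp_pos _
  set C : ℝ := ∑ i, β i * p i + ∑ j, γ j * pt j - 1/lam with hC
  -- G π := relative-entropy-like gap
  set G : (Fin n → Fin m → ℝ) → ℝ :=
    fun π => ∑ i, ∑ j, (π i j * Real.log (π i j) - π i j * Real.log (πstar i j)) with hG
  have hkey : ∀ π, IsPlan p pt π →
      cost d π + (1/lam) * ∑ i, ∑ j, π i j * Real.log (π i j) = C + (1/lam) * G π :=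
    fun π hπ => key_identity d p pt lam hlam.ne' β γ πstar hform hps π hπ
  have hGstar : G πstar = 0 := by simp [hG]
  -- total mass of any plan is 1
  have hmass : ∀ π, IsPlan p pt π → ∑ i, ∑ j, π i j = 1 := by
    intro π hπ
    rw [Finset.sum_congr rfl fun i _ => hπ.2.1 i, hps]
  -- G π equals sum of pointwise nonneg gaps
  have hGsplit : ∀ π, IsPlan p pt π →
      G π = ∑ i, ∑ j, ((π i j * Real.log (π i j) - π i j * Real.log (πstar i j))
        - (π i j - πstar i j)) := by
    intro π hπ
    have h1 : ∑ i, ∑ j, (π i j - πstar i j) = 0 := by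
      simp only [Finset.sum_sub_distrib]
      rw [hmass π hπ, hmass πstar hplan]
      ring
    simp only [Finset.sum_sub_distrib] at h1 ⊢
    simp only [hG]
    simp only [Finset.sum_sub_distrib]
    linarith
  have hGnonneg : ∀ π, IsPlan p pt π → 0 ≤ G π := by
    intro π hπ
    rw [hGsplit π hπ]
    refine Finset.sum_nonneg fun i _ => Finset.sum_nonneg fun j _ => ?_
    have := pw_le (π i j) (πstar i j) (hπ.1 i j) (hspos i j)
    linarith
  constructor
  · intro π hπ
    rw [hkey π hπ, hkey πstar hplan, hGstar]
    have := hGnonneg π hπ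
    have h1lam : 0 < 1/lam := by positivity
    nlinarith
  · intro π hπ hmin
    have hle := hmin πstar hplan
    rw [hkey π hπ, hkey πstar hplan, hGstar] at hle
    have h1lam : 0 < 1/lam := by positivity
    have hGle : G π ≤ 0 := by nlinarith
    funext i j
    by_contra hne
    have hpos_term : 0 < ∑ i, ∑ j, ((π i j * Real.log (π i j) - π i j * Real.log (πstar i j))
        - (π i j - πstar i j)) := by
      refine Finset.sum_pos' (fun i _ => Finset.sum_nonneg fun j _ => ?_) ⟨i, Finset.mem_univ i, ?_⟩
      · have := pw_le (π i j) (πstar i j) (hπ.1 i j) (hspos i j); linarith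
      · refine Finset.sum_pos' (fun j _ => ?_) ⟨j, Finset.mem_univ j, ?_⟩
        · have := pw_le (π i j) (πstar i j) (hπ.1 i j) (hspos i j); linarith
        · have := pw_lt (π i j) (πstar i j) (hπ.1 i j) (hspos i j) hne; linarith
    rw [← hGsplit π hπ] at hpos_term
    linarith
end

section
/- (Sinkhorn's theorem, existence and essential uniqueness of scaling) Let K ∈ ℝ^{n×m} be a matrix with strictly positive entries, and let p ∈ ℝ^n, p̃ ∈ ℝ^m be strictly positive vectors with ∑_i p_i = ∑_j p̃_j. Then there exist strictly positive diagonal scalings, i.e., vectors u ∈ ℝ_{>0}^n and v ∈ ℝ_{>0}^m, such that the matrix with entries u_i K_{ij} v_j has row sums p_i and column sums p̃_j; moreover u and v are unique up to replacing (u, v) by (c·u, v/c) for a constant c > 0. -/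
open Finset Real

private noncomputable def sinkG {n m : ℕ} (K : Fin n → Fin m → ℝ) (p : Fin n → ℝ)
    (pt : Fin m → ℝ) (y : Fin m → ℝ) : ℝ :=
  ∑ i, p i * Real.log (∑ j, K i j * Real.exp (y j)) - ∑ j, pt j * y j + (∑ j, y j) ^ 2

private lemma row_pos {n m : ℕ} (hm : 0 < m) (K : Fin n → Fin m → ℝ)
    (hK : ∀ i j, 0 < K i j) (i : Fin n) (y : Fin m → ℝ) :
    0 < ∑ j, K i j * Real.exp (y j) := by
  haveI : Nonempty (Fin m) := Fin.pos_iff_nonempty.mp hm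
  exact Finset.sum_pos (fun j _ => mul_pos (hK i j) (Real.exp_pos _)) univ_nonempty

private lemma sinkG_hasDerivAt {n m : ℕ} (hm : 0 < m) (K : Fin n → Fin m → ℝ)
    (hK : ∀ i j, 0 < K i j) (p : Fin n → ℝ) (pt : Fin m → ℝ)
    (y : Fin m → ℝ) (j : Fin m) :
    HasDerivAt (fun t => sinkG K p pt (fun j' => y j' + t * (if j' = j then (1:ℝ) else 0)))
      ((∑ i, p i * (K i j * Real.exp (y j) / ∑ j', K i j' * Real.exp (y j')))
        - pt j + 2 * ∑ j', y j') 0 := by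
  -- derivative of each row sum
  have hrow : ∀ i : Fin n,
      HasDerivAt (fun t => ∑ j', K i j' * Real.exp (y j' + t * (if j' = j then (1:ℝ) else 0)))
        (K i j * Real.exp (y j)) 0 := by
    intro i
    have h1 : ∀ j' : Fin m, j' ∈ Finset.univ →
        HasDerivAt (fun t => K i j' * Real.exp (y j' + t * (if j' = j then (1:ℝ) else 0)))
          (K i j' * (Real.exp (y j' + 0 * (if j' = j then (1:ℝ) else 0)) * (if j' = j then (1:ℝ) else 0))) 0 := by
      intro j' _
      exact (((hasDerivAt_mul_const _).const_add (y j')).exp).const_mul _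
    have := HasDerivAt.fun_sum h1
    refine this.congr_deriv ?_
    rw [Finset.sum_eq_single j]
    · simp
    · intro b _ hb; simp [hb]
    · simp
  have hlog : HasDerivAt
      (fun t => ∑ i, p i * Real.log (∑ j', K i j' * Real.exp (y j' + t * (if j' = j then (1:ℝ) else 0))))
      (∑ i, p i * (K i j * Real.exp (y j) / ∑ j', K i j' * Real.exp (y j'))) 0 := by
    apply HasDerivAt.fun_sum
    intro i _
    have hne : (∑ j', K i j' * Real.exp (y j' + 0 * (if j' = j then (1:ℝ) else 0))) ≠ 0 := by
      have := row_pos hm K hK i (fun j' => y j' + 0 * (if j' = j then (1:ℝ) else 0))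
      exact ne_of_gt this
    have := ((hrow i).log hne).const_mul (p i)
    exact this.congr_deriv (by simp)
  have hlin : HasDerivAt (fun t => ∑ j', pt j' * (y j' + t * (if j' = j then (1:ℝ) else 0)))
      (pt j) 0 := by
    have h1 : ∀ j' : Fin m, j' ∈ Finset.univ →
        HasDerivAt (fun t => pt j' * (y j' + t * (if j' = j then (1:ℝ) else 0)))
          (pt j' * (if j' = j then (1:ℝ) else 0)) 0 := fun j' _ =>
      ((hasDerivAt_mul_const _).const_add (y j')).const_mul _
    have := HasDerivAt.fun_sum h1
    refine this.congr_deriv ?_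
    rw [Finset.sum_eq_single j]
    · simp
    · intro b _ hb; simp [hb]
    · simp
  have hsq : HasDerivAt (fun t => (∑ j', (y j' + t * (if j' = j then (1:ℝ) else 0))) ^ 2)
      (2 * ∑ j', y j') 0 := by
    have h1 : ∀ j' : Fin m, j' ∈ Finset.univ →
        HasDerivAt (fun t => y j' + t * (if j' = j then (1:ℝ) else 0))
          ((if j' = j then (1:ℝ) else 0)) 0 := fun j' _ =>
      (hasDerivAt_mul_const _).const_add (y j')
    have hsum := HasDerivAt.fun_sum h1
    have := hsum.pow 2
    refine this.congr_deriv ?_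
    simp [Finset.sum_add_distrib, mul_comm]
  have := (hlog.sub hlin).add hsq
  exact this

private lemma sinkG_ge {n m : ℕ} (hn : 0 < n) (hm : 0 < m) (K : Fin n → Fin m → ℝ)
    (p : Fin n → ℝ) (pt : Fin m → ℝ) (hp : ∀ i, 0 < p i) (hK : ∀ i j, 0 < K i j)
    (hsum : ∑ i, p i = ∑ j, pt j)
    (κ δ : ℝ) (hκ : 0 < κ) (hκK : ∀ i j, κ ≤ K i j) (hδ : 0 < δ) (hδpt : ∀ j, δ ≤ pt j)
    (y : Fin m → ℝ) :
    (∑ i, p i) * Real.log κ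
      + δ * (m * (Finset.univ.sup' (Finset.univ_nonempty_iff.mpr (Fin.pos_iff_nonempty.mp hm)) y) - ∑ j, y j)
      + (∑ j, y j) ^ 2
      ≤ (∑ i, p i * Real.log (∑ j, K i j * Real.exp (y j)) - ∑ j, pt j * y j + (∑ j, y j) ^ 2) := by
  haveI : Nonempty (Fin m) := Fin.pos_iff_nonempty.mp hm
  set b := Finset.univ.sup' (Finset.univ_nonempty_iff.mpr (Fin.pos_iff_nonempty.mp hm)) y with hb
  have hyb : ∀ j, y j ≤ b := fun j => Finset.le_sup' y (Finset.mem_univ j)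
  obtain ⟨jb, _, hjb⟩ := Finset.exists_mem_eq_sup' (Finset.univ_nonempty_iff.mpr ‹Nonempty (Fin m)›) y
  -- row lower bound
  have hrow : ∀ i : Fin n, Real.log κ + b ≤ Real.log (∑ j, K i j * Real.exp (y j)) := by
    intro i
    have h1 : κ * Real.exp b ≤ ∑ j, K i j * Real.exp (y j) := by
      calc κ * Real.exp b ≤ K i jb * Real.exp (y jb) := by
            rw [← hjb]
            exact mul_le_mul (hκK i jb) le_rfl (le_of_lt (Real.exp_pos _)) (le_of_lt (hK i jb))
        _ ≤ ∑ j, K i j * Real.exp (y j) :=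
            Finset.single_le_sum (fun j _ => le_of_lt (mul_pos (hK i j) (Real.exp_pos _)))
              (Finset.mem_univ jb)
    calc Real.log κ + b = Real.log (κ * Real.exp b) := by
          rw [Real.log_mul (ne_of_gt hκ) (ne_of_gt (Real.exp_pos _)), Real.log_exp]
      _ ≤ _ := Real.log_le_log (mul_pos hκ (Real.exp_pos _)) h1
  have hlogsum : (∑ i, p i) * (Real.log κ + b) ≤ ∑ i, p i * Real.log (∑ j, K i j * Real.exp (y j)) := by
    rw [Finset.sum_mul]
    exact Finset.sum_le_sum (fun i _ => mul_le_mul_of_nonneg_left (hrow i) (hp i).le)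
  have hlin : ∑ j, pt j * y j ≤ (∑ i, p i) * b - δ * (m * b - ∑ j, y j) := by
    have h1 : δ * ((m : ℝ) * b - ∑ j, y j) ≤ ∑ j, pt j * (b - y j) := by
      have : ∀ j : Fin m, j ∈ Finset.univ → δ * (b - y j) ≤ pt j * (b - y j) := fun j _ =>
        mul_le_mul_of_nonneg_right (hδpt j) (by linarith [hyb j])
      calc δ * ((m : ℝ) * b - ∑ j, y j) = ∑ j : Fin m, δ * (b - y j) := by
            rw [← Finset.mul_sum]
            congr 1
            rw [Finset.sum_sub_distrib, Finset.sum_const, Finset.card_univ, Fintype.card_fin,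
              nsmul_eq_mul]
        _ ≤ _ := Finset.sum_le_sum this
    have h2 : ∑ j, pt j * y j = (∑ i, p i) * b - ∑ j, pt j * (b - y j) := by
      rw [hsum, Finset.sum_mul, ← Finset.sum_sub_distrib]
      congr 1; funext j; ring
    linarith
  linarith

private lemma sinkhorn_exists {n m : ℕ} (hn : 0 < n) (hm : 0 < m)
    (K : Fin n → Fin m → ℝ) (hK : ∀ i j, 0 < K i j)
    (p : Fin n → ℝ) (pt : Fin m → ℝ)
    (hp : ∀ i, 0 < p i) (hpt : ∀ j, 0 < pt j)
    (hsum : ∑ i, p i = ∑ j, pt j) :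
    ∃ u : Fin n → ℝ, ∃ v : Fin m → ℝ,
      (∀ i, 0 < u i) ∧ (∀ j, 0 < v j) ∧
      (∀ i, ∑ j, u i * K i j * v j = p i) ∧
      (∀ j, ∑ i, u i * K i j * v j = pt j) := by
  haveI hne_n : Nonempty (Fin n) := Fin.pos_iff_nonempty.mp hn
  haveI hne_m : Nonempty (Fin m) := Fin.pos_iff_nonempty.mp hm
  -- uniform bounds
  set κ : ℝ := Finset.univ.inf' Finset.univ_nonempty (fun i => Finset.univ.inf' Finset.univ_nonempty (K i)) with hκdef
  have hκK : ∀ i j, κ ≤ K i j := fun i j =>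
    le_trans (Finset.inf'_le _ (Finset.mem_univ i)) (Finset.inf'_le _ (Finset.mem_univ j))
  have hκ : 0 < κ := by
    rw [hκdef, Finset.lt_inf'_iff]
    intro i _
    rw [Finset.lt_inf'_iff]
    exact fun j _ => hK i j
  set δ : ℝ := Finset.univ.inf' Finset.univ_nonempty pt with hδdef
  have hδpt : ∀ j, δ ≤ pt j := fun j => Finset.inf'_le _ (Finset.mem_univ j)
  have hδ : 0 < δ := by
    rw [hδdef, Finset.lt_inf'_iff]; exact fun j _ => hpt j
  set G : (Fin m → ℝ) → ℝ := sinkG K p pt with hGdef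
  have hGcont : Continuous G := by
    rw [hGdef]
    unfold sinkG
    apply Continuous.add
    · apply Continuous.sub
      · apply continuous_finset_sum
        intro i _
        apply Continuous.mul continuous_const
        have hinner : Continuous fun y : Fin m → ℝ => ∑ j, K i j * Real.exp (y j) :=
          continuous_finset_sum _ fun j _ =>
            continuous_const.mul ((continuous_apply j).rexp)
        rw [continuous_iff_continuousAt]
        intro y
        exact (hinner.continuousAt).log (ne_of_gt (row_pos hm K hK i y))
      · exact continuous_finset_sum _ fun j _ => continuous_const.mul (continuous_apply j)
    · exact (continuous_finset_sum _ fun j _ => continuous_apply j).pow 2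
  -- sublevel bound
  set B : ℝ := G 0 with hBdef
  set C₀ : ℝ := (∑ i, p i) * Real.log κ with hC₀def
  have key : ∀ y : Fin m → ℝ, C₀ + δ * (m * (Finset.univ.sup' Finset.univ_nonempty y) - ∑ j, y j)
      + (∑ j, y j) ^ 2 ≤ G y := fun y =>
    sinkG_ge hn hm K p pt hp hK hsum κ δ hκ hκK hδ hδpt y
  have hBC : C₀ ≤ B := by
    have h := key 0
    have hsup0 : Finset.univ.sup' Finset.univ_nonempty (0 : Fin m → ℝ) = 0 := by
      apply le_antisymm
      · exact Finset.sup'_le _ _ (fun j _ => le_rfl)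
      · exact Finset.le_sup' (f := (0 : Fin m → ℝ)) (Finset.mem_univ (Classical.arbitrary _))
    rw [hsup0] at h
    simpa using h
  set s₀ : ℝ := Real.sqrt (B - C₀) with hs₀def
  have hs₀ : 0 ≤ s₀ := Real.sqrt_nonneg _
  set T : ℝ := (B - C₀) / δ with hTdef
  have hT : 0 ≤ T := div_nonneg (by linarith) hδ.le
  set R : ℝ := T + s₀ with hRdef
  have hR : 0 ≤ R := by positivity
  have hsub : ∀ y : Fin m → ℝ, G y ≤ B → ∀ j, |y j| ≤ R := by
    intro y hy j
    set b : ℝ := Finset.univ.sup' Finset.univ_nonempty y with hbdef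
    have hyb : ∀ j', y j' ≤ b := fun j' => Finset.le_sup' y (Finset.mem_univ j')
    set σ : ℝ := ∑ j', y j' with hσdef
    have hmbσ : 0 ≤ (m : ℝ) * b - σ := by
      have : σ ≤ ∑ _j' : Fin m, b := Finset.sum_le_sum (fun j' _ => hyb j')
      simp only [Finset.sum_const, Finset.card_univ, Fintype.card_fin, nsmul_eq_mul] at this
      linarith
    have hkey := key y
    have hσsq : σ ^ 2 ≤ B - C₀ := by nlinarith [mul_nonneg hδ.le hmbσ]
    have hσabs : |σ| ≤ s₀ := by
      rw [hs₀def, ← Real.sqrt_sq_eq_abs]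
      exact Real.sqrt_le_sqrt hσsq
    have habs := abs_le.mp hσabs
    have hmb : (m : ℝ) * b - σ ≤ T := by
      rw [hTdef, le_div_iff₀ hδ]
      nlinarith [sq_nonneg σ]
    have hm1 : (1 : ℝ) ≤ m := by exact_mod_cast hm
    -- upper bound on b
    have hbub : b ≤ T + s₀ := by
      rcases le_or_gt b 0 with h | h
      · linarith
      · nlinarith
    -- lower bound on b
    have hblb : -s₀ ≤ b := by
      rcases le_or_gt 0 b with h | h
      · linarith
      · nlinarith
    -- bound on each coordinate
    have hyj_ub : y j ≤ R := le_trans (hyb j) (by linarith)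
    have hyj_lb : -R ≤ y j := by
      have h1 : b - y j ≤ (m : ℝ) * b - σ := by
        have : ∑ j', (b - y j') = (m : ℝ) * b - σ := by
          rw [Finset.sum_sub_distrib, Finset.sum_const, Finset.card_univ, Fintype.card_fin,
            nsmul_eq_mul, hσdef]
        rw [← this]
        exact Finset.single_le_sum (f := fun j' => b - y j')
          (fun j' _ => sub_nonneg.mpr (hyb j')) (Finset.mem_univ j)
      linarith
    exact abs_le.mpr ⟨hyj_lb, hyj_ub⟩
  -- minimize over the closed ball
  obtain ⟨y₀, hy₀S, hmin⟩ := (isCompact_closedBall (0 : Fin m → ℝ) R).exists_isMinOn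
    ⟨0, Metric.mem_closedBall_self hR⟩ hGcont.continuousOn
  have hglob : ∀ y, G y₀ ≤ G y := by
    intro y
    by_cases h : G y ≤ B
    · apply hmin
      rw [Metric.mem_closedBall, dist_zero_right]
      rw [pi_norm_le_iff_of_nonneg hR]
      intro j
      rw [Real.norm_eq_abs]
      exact hsub y h j
    · calc G y₀ ≤ G 0 := hmin (Metric.mem_closedBall_self hR)
        _ ≤ G y := by rw [← hBdef]; linarith
  -- derivative conditions
  set r : Fin n → ℝ := fun i => ∑ j, K i j * Real.exp (y₀ j) with hrdef
  have hrpos : ∀ i, 0 < r i := fun i => row_pos hm K hK i y₀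
  have hD : ∀ j, (∑ i, p i * (K i j * Real.exp (y₀ j) / r i)) - pt j + 2 * ∑ j', y₀ j' = 0 := by
    intro j
    have hder := sinkG_hasDerivAt hm K hK p pt y₀ j
    have hloc : IsLocalMin (fun t => sinkG K p pt (fun j' => y₀ j' + t * (if j' = j then (1:ℝ) else 0))) 0 := by
      apply Filter.Eventually.of_forall
      intro t
      have h0 : (fun j' => y₀ j' + (0:ℝ) * (if j' = j then (1:ℝ) else 0)) = y₀ := by
        funext j'; simp
      simp only [h0]
      exact hglob _
    exact hloc.hasDerivAt_eq_zero hder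
  -- sum of derivative conditions gives σ₀ = 0
  have hσ0 : ∑ j', y₀ j' = 0 := by
    have h1 : ∑ j, ((∑ i, p i * (K i j * Real.exp (y₀ j) / r i)) - pt j + 2 * ∑ j', y₀ j') = 0 :=
      Finset.sum_eq_zero (fun j _ => hD j)
    have h2 : ∑ j, (∑ i, p i * (K i j * Real.exp (y₀ j) / r i)) = ∑ i, p i := by
      rw [Finset.sum_comm]
      apply Finset.sum_congr rfl
      intro i _
      have : ∑ j, p i * (K i j * Real.exp (y₀ j) / r i) = p i * ((∑ j, K i j * Real.exp (y₀ j)) / r i) := by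
        rw [Finset.sum_div, Finset.mul_sum]
      have h4 : (∑ j, K i j * Real.exp (y₀ j)) = r i := rfl
      rw [this, h4, div_self (ne_of_gt (hrpos i)), mul_one]
    rw [Finset.sum_add_distrib, Finset.sum_sub_distrib, h2, hsum, Finset.sum_const,
      Finset.card_univ, Fintype.card_fin, nsmul_eq_mul] at h1
    have hm0 : (0:ℝ) < m := by exact_mod_cast hm
    have h3 : (m:ℝ) * (2 * ∑ j', y₀ j') = 0 := by linarith
    rcases mul_eq_zero.mp h3 with h | h
    · exact absurd h (ne_of_gt hm0)
    · linarith
  -- construct u and v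
  refine ⟨fun i => p i / r i, fun j => Real.exp (y₀ j), fun i => div_pos (hp i) (hrpos i),
    fun j => Real.exp_pos _, ?_, ?_⟩
  · intro i
    have : ∑ j, p i / r i * K i j * Real.exp (y₀ j) = p i / r i * ∑ j, K i j * Real.exp (y₀ j) := by
      rw [Finset.mul_sum]
      exact Finset.sum_congr rfl (fun j _ => by ring)
    have h4 : (∑ j, K i j * Real.exp (y₀ j)) = r i := rfl
    rw [this, h4, div_mul_cancel₀ _ (ne_of_gt (hrpos i))]
  · intro j
    have h1 := hD j
    rw [hσ0] at h1
    have h2 : ∑ i, p i * (K i j * Real.exp (y₀ j) / r i) = pt j := by linarith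
    rw [← h2]
    exact Finset.sum_congr rfl (fun i _ => by ring)

private lemma sinkhorn_unique {n m : ℕ} (hn : 0 < n) (hm : 0 < m)
    (K : Fin n → Fin m → ℝ) (hK : ∀ i j, 0 < K i j)
    (u : Fin n → ℝ) (v : Fin m → ℝ) (u' : Fin n → ℝ) (v' : Fin m → ℝ)
    (hu : ∀ i, 0 < u i) (hv : ∀ j, 0 < v j)
    (hu' : ∀ i, 0 < u' i) (hv' : ∀ j, 0 < v' j)
    (hrow : ∀ i, ∑ j, u' i * K i j * v' j = ∑ j, u i * K i j * v j)
    (hcol : ∀ j, ∑ i, u' i * K i j * v' j = ∑ i, u i * K i j * v j) :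
    ∃ c : ℝ, 0 < c ∧ (∀ i, u' i = c * u i) ∧ (∀ j, v' j = v j / c) := by
  haveI hne_n : Nonempty (Fin n) := Fin.pos_iff_nonempty.mp hn
  haveI hne_m : Nonempty (Fin m) := Fin.pos_iff_nonempty.mp hm
  set r : Fin n → ℝ := fun i => u' i / u i with hrdef
  set s : Fin m → ℝ := fun j => v' j / v j with hsdef
  have hr : ∀ i, 0 < r i := fun i => div_pos (hu' i) (hu i)
  have hs : ∀ j, 0 < s j := fun j => div_pos (hv' j) (hv j)
  set w : Fin n → Fin m → ℝ := fun i j => u i * K i j * v j with hwdef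
  have hw : ∀ i j, 0 < w i j := fun i j => mul_pos (mul_pos (hu i) (hK i j)) (hv j)
  have hid : ∀ i j, u' i * K i j * v' j = w i j * (r i * s j) := by
    intro i j
    rw [hwdef, hrdef, hsdef]
    have h1 := (hu i).ne'
    have h2 := (hv j).ne'
    field_simp
  obtain ⟨i₀, _, hi₀⟩ := Finset.exists_max_image Finset.univ r Finset.univ_nonempty
  set c : ℝ := r i₀ with hcdef
  have hc : 0 < c := hr i₀
  have hrc : ∀ i, r i ≤ c := fun i => hi₀ i (Finset.mem_univ i)
  -- rewritten equations
  have hcol' : ∀ j, s j * ∑ i, w i j * r i = ∑ i, w i j := by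
    intro j
    rw [← hcol j]
    rw [Finset.mul_sum]
    exact Finset.sum_congr rfl (fun i _ => by rw [hid]; ring)
  have hrow' : ∀ i, r i * ∑ j, w i j * s j = ∑ j, w i j := by
    intro i
    rw [← hrow i]
    rw [Finset.mul_sum]
    exact Finset.sum_congr rfl (fun j _ => by rw [hid]; ring)
  have hwrpos : ∀ j, 0 < ∑ i, w i j * r i :=
    fun j => Finset.sum_pos (fun i _ => mul_pos (hw i j) (hr i)) Finset.univ_nonempty
  have hwcolpos : ∀ j, 0 < ∑ i, w i j :=
    fun j => Finset.sum_pos (fun i _ => hw i j) Finset.univ_nonempty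
  have hwrowpos : ∀ i, 0 < ∑ j, w i j :=
    fun i => Finset.sum_pos (fun j _ => hw i j) Finset.univ_nonempty
  -- step 1 : s j ≥ 1/c
  have hstep1 : ∀ j, 1 / c ≤ s j := by
    intro j
    have h1 : ∑ i, w i j * r i ≤ c * ∑ i, w i j := by
      rw [Finset.mul_sum]
      exact Finset.sum_le_sum (fun i _ => by
        rw [mul_comm (c) (w i j)]
        exact mul_le_mul_of_nonneg_left (hrc i) (hw i j).le)
    rw [div_le_iff₀ hc]
    have h2 : (1 : ℝ) * ∑ i, w i j * r i ≤ (s j * c) * ∑ i, w i j * r i := by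
      rw [one_mul]
      calc ∑ i, w i j * r i ≤ c * ∑ i, w i j := h1
        _ = c * (s j * ∑ i, w i j * r i) := by rw [hcol' j]
        _ = (s j * c) * ∑ i, w i j * r i := by ring
    exact le_of_mul_le_mul_right (by linarith [h2]) (hwrpos j)
  -- step 2 : s j = 1/c for all j
  have hstep2 : ∀ j, s j = 1 / c := by
    have hkey : ∑ j, w i₀ j * (s j - 1 / c) = 0 := by
      have h1 : ∑ j, w i₀ j * s j = (1 / c) * ∑ j, w i₀ j := by
        have := hrow' i₀
        rw [← hcdef] at this
        field_simp
        linarith [this]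
      rw [Finset.sum_congr rfl (fun j (_ : j ∈ Finset.univ) => mul_sub (w i₀ j) (s j) (1/c)),
        Finset.sum_sub_distrib, h1, ← Finset.sum_mul]
      ring
    intro j
    have h2 := (Finset.sum_eq_zero_iff_of_nonneg (fun j _ =>
      mul_nonneg (hw i₀ j).le (by linarith [hstep1 j]))).mp hkey j (Finset.mem_univ j)
    have h3 : s j - 1 / c = 0 := by
      rcases mul_eq_zero.mp h2 with h | h
      · exact absurd h (ne_of_gt (hw i₀ j))
      · exact h
    linarith
  -- step 3 : r i = c for all i
  have hstep3 : ∀ i, r i = c := by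
    intro i
    have h1 : ∑ j, w i j * s j = (1 / c) * ∑ j, w i j := by
      rw [Finset.mul_sum]
      exact Finset.sum_congr rfl (fun j _ => by rw [hstep2 j]; ring)
    have h2 := hrow' i
    rw [h1] at h2
    have h3 : r i * (1/c) * ∑ j, w i j = 1 * ∑ j, w i j := by
      rw [one_mul]; rw [mul_assoc]; exact h2
    have h4 : r i * (1/c) = 1 := le_antisymm (by nlinarith [hwrowpos i]) (by nlinarith [hwrowpos i])
    field_simp at h4
    exact h4
  refine ⟨c, hc, fun i => ?_, fun j => ?_⟩
  · have := hstep3 i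
    rw [hrdef] at this
    simp only at this
    rw [div_eq_iff (hu i).ne'] at this
    exact this
  · have := hstep2 j
    rw [hsdef] at this
    simp only at this
    rw [div_eq_div_iff (hv j).ne' hc.ne'] at this
    rw [eq_div_iff hc.ne']
    linarith [this]

/-- Sinkhorn's matrix scaling theorem: existence and essential uniqueness of
positive diagonal scalings realizing prescribed row and column sums. -/
theorem sinkhorn_matrix_scaling {n m : ℕ}
    (K : Fin n → Fin m → ℝ) (hK : ∀ i j, 0 < K i j)
    (p : Fin n → ℝ) (pt : Fin m → ℝ)
    (hp : ∀ i, 0 < p i) (hpt : ∀ j, 0 < pt j)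
    (hsum : ∑ i, p i = ∑ j, pt j) :
    ∃ u : Fin n → ℝ, ∃ v : Fin m → ℝ,
      (∀ i, 0 < u i) ∧ (∀ j, 0 < v j) ∧
      (∀ i, ∑ j, u i * K i j * v j = p i) ∧
      (∀ j, ∑ i, u i * K i j * v j = pt j) ∧
      (∀ u' : Fin n → ℝ, ∀ v' : Fin m → ℝ,
        (∀ i, 0 < u' i) → (∀ j, 0 < v' j) →
        (∀ i, ∑ j, u' i * K i j * v' j = p i) →
        (∀ j, ∑ i, u' i * K i j * v' j = pt j) →
        ∃ c : ℝ, 0 < c ∧ (∀ i, u' i = c * u i) ∧ (∀ j, v' j = v j / c)) := by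
  rcases Nat.eq_zero_or_pos n with hn | hn
  · have hm : m = 0 := by
      by_contra h
      have hm' : 0 < m := Nat.pos_of_ne_zero h
      haveI : Nonempty (Fin m) := Fin.pos_iff_nonempty.mp hm'
      have h1 : 0 < ∑ j, pt j := Finset.sum_pos (fun j _ => hpt j) Finset.univ_nonempty
      rw [← hsum] at h1
      subst hn
      simp at h1
    subst hn; subst hm
    refine ⟨fun _ => 1, fun _ => 1, fun i => i.elim0, fun j => j.elim0,
      fun i => i.elim0, fun j => j.elim0, ?_⟩
    intro u' v' _ _ _ _
    exact ⟨1, one_pos, fun i => i.elim0, fun j => j.elim0⟩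
  · have hm : 0 < m := by
      by_contra h
      have hm0 : m = 0 := Nat.eq_zero_of_not_pos h
      haveI : Nonempty (Fin n) := Fin.pos_iff_nonempty.mp hn
      have h1 : 0 < ∑ i, p i := Finset.sum_pos (fun i _ => hp i) Finset.univ_nonempty
      rw [hsum] at h1
      subst hm0
      simp at h1
    obtain ⟨u, v, hu, hv, hrows, hcols⟩ := sinkhorn_exists hn hm K hK p pt hp hpt hsum
    refine ⟨u, v, hu, hv, hrows, hcols, ?_⟩
    intro u' v' hu' hv' hrows' hcols'
    exact sinkhorn_unique hn hm K hK u v u' v' hu hv hu' hv'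
      (fun i => (hrows' i).trans (hrows i).symm)
      (fun j => (hcols' j).trans (hcols j).symm)
end

section
/- Let the entropy-regularized nested divergence de_S and the nested (Wasserstein) distance d_W be computed between two scenario trees of depth T in which every node has at most m (respectively m̃) immediate successors. Then de_S - d_W ≤ T·(log m + log m̃)/λ for every λ > 0; in particular |de_S - d_W| ≤ T·(log m + log m̃)/λ since also de_S ≤ d_W. -/
/-- tangent bound for `x log x` at `t`. -/
lemma mul_log_tangent {x t : ℝ} (hx : 0 ≤ x) (ht : 0 < t) :
    x * Real.log t + x - t ≤ x * Real.log x := by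
  rcases eq_or_lt_of_le hx with h | hx
  · simp [← h, ht.le]
  · have h1 : Real.log (t / x) ≤ t / x - 1 := Real.log_le_sub_one_of_pos (by positivity)
    have h2 : Real.log t - Real.log x ≤ t / x - 1 := by
      rwa [Real.log_div ht.ne' hx.ne'] at h1
    have := mul_le_mul_of_nonneg_left h2 hx.le
    have hxx : x * (t / x) = t := by field_simp
    nlinarith [this]

/-- entropy is at most `log (card α)` for a probability vector. -/
lemma entropy_lower {α : Type*} [Fintype α] (p : α → ℝ)
    (h0 : ∀ a, 0 ≤ p a) (h1 : ∑ a, p a = 1) :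
    -(Real.log (Fintype.card α)) ≤ ∑ a, p a * Real.log (p a) := by
  have hne : Nonempty α := by
    by_contra h
    rw [not_nonempty_iff] at h
    simp at h1
  have hN : (0:ℝ) < (Fintype.card α : ℝ) := by
    exact_mod_cast Fintype.card_pos
  set N : ℝ := (Fintype.card α : ℝ)
  have key : ∀ a, p a * Real.log (1/N) + p a - 1/N ≤ p a * Real.log (p a) :=
    fun a => mul_log_tangent (h0 a) (by positivity)
  have hsum : ∑ a, (p a * Real.log (1/N) + p a - 1/N) ≤ ∑ a, p a * Real.log (p a) :=
    Finset.sum_le_sum (fun a _ => key a)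
  have hcard : ∑ _a : α, (1/N : ℝ) = 1 := by
    rw [Finset.sum_const, Finset.card_univ]
    rw [nsmul_eq_mul]; exact mul_one_div_cancel hN.ne'
  rw [Finset.sum_sub_distrib, Finset.sum_add_distrib, ← Finset.sum_mul, h1, hcard,
    one_div, Real.log_inv] at hsum
  linarith

lemma entropy_upper {α : Type*} [Fintype α] (p : α → ℝ)
    (h0 : ∀ a, 0 ≤ p a) (h1 : ∑ a, p a = 1) :
    ∑ a, p a * Real.log (p a) ≤ 0 := by
  apply Finset.sum_nonpos
  intro a _
  have hle : p a ≤ 1 := by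
    rw [← h1]
    exact Finset.single_le_sum (fun b _ => h0 b) (Finset.mem_univ a)
  exact mul_nonpos_of_nonneg_of_nonpos (h0 a) (Real.log_nonpos (h0 a) hle)


/-- Bound on the gap between the entropy-regularized nested divergence and the
nested distance for scenario trees of depth `T` with branching bounded by `m`
(resp. `mt`).  Processes of depth `T` with branching at most `m` are modelled by
probability distributions on the path space `Fin T → Fin m`; the feasible set
`Π` of couplings (incorporating the conditional-marginal, i.e. nested,
constraints) is abstract, with `πW` an optimizer of the linear nested-distance
program and `πS` an optimizer of the entropy-regularized program over `Π`. -/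
theorem nested_sinkhorn_gap_bound {m mt T : ℕ}
    (c : ((Fin T → Fin m) × (Fin T → Fin mt)) → ℝ)
    (lam : ℝ) (hlam : 0 < lam)
    (Pi : Set (((Fin T → Fin m) × (Fin T → Fin mt)) → ℝ))
    (hprob : ∀ π ∈ Pi, (∀ ω, 0 ≤ π ω) ∧ ∑ ω, π ω = 1)
    (πW πS : ((Fin T → Fin m) × (Fin T → Fin mt)) → ℝ)
    (hWmem : πW ∈ Pi) (hSmem : πS ∈ Pi)
    (hWopt : ∀ π ∈ Pi, ∑ ω, πW ω * c ω ≤ ∑ ω, π ω * c ω)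
    (hSopt : ∀ π ∈ Pi,
      (∑ ω, πS ω * c ω) + (1/lam) * ∑ ω, πS ω * Real.log (πS ω)
        ≤ (∑ ω, π ω * c ω) + (1/lam) * ∑ ω, π ω * Real.log (π ω)) :
    ((∑ ω, πS ω * c ω) + (1/lam) * ∑ ω, πS ω * Real.log (πS ω))
        - (∑ ω, πW ω * c ω) ≤ T * (Real.log m + Real.log mt) / lam ∧
    |((∑ ω, πS ω * c ω) + (1/lam) * ∑ ω, πS ω * Real.log (πS ω))
        - (∑ ω, πW ω * c ω)| ≤ T * (Real.log m + Real.log mt) / lam := by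
  obtain ⟨hS0, hS1⟩ := hprob πS hSmem
  obtain ⟨hW0, hW1⟩ := hprob πW hWmem
  set A := ∑ ω, πS ω * c ω
  set B := ∑ ω, πW ω * c ω
  set ES := ∑ ω, πS ω * Real.log (πS ω)
  set EW := ∑ ω, πW ω * Real.log (πW ω)
  have hESup : ES ≤ 0 := entropy_upper πS hS0 hS1
  have hEWup : EW ≤ 0 := entropy_upper πW hW0 hW1
  have hcard : (Fintype.card ((Fin T → Fin m) × (Fin T → Fin mt)) : ℝ)
      = (m : ℝ) ^ T * (mt : ℝ) ^ T := by
    simp [Fintype.card_prod, Fintype.card_fun]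
  have hne : Nonempty ((Fin T → Fin m) × (Fin T → Fin mt)) := by
    by_contra h
    rw [not_nonempty_iff] at h
    simp at hS1
  have hpos : (0:ℝ) < (Fintype.card ((Fin T → Fin m) × (Fin T → Fin mt)) : ℝ) := by
    exact_mod_cast Fintype.card_pos
  have hm : (m:ℝ)^T ≠ 0 := by
    intro h; rw [hcard, h, zero_mul] at hpos; exact lt_irrefl 0 hpos
  have hmt : (mt:ℝ)^T ≠ 0 := by
    intro h; rw [hcard, h, mul_zero] at hpos; exact lt_irrefl 0 hpos
  have hlog : Real.log (Fintype.card ((Fin T → Fin m) × (Fin T → Fin mt)))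
      = T * (Real.log m + Real.log mt) := by
    rw [hcard, Real.log_mul hm hmt, Real.log_pow, Real.log_pow]
    ring
  have hESlow : -(T * (Real.log m + Real.log mt)) ≤ ES := by
    have := entropy_lower πS hS0 hS1
    rwa [hlog] at this
  have hRHS0 : 0 ≤ (T:ℝ) * (Real.log m + Real.log mt) := by
    have h1 := Real.log_natCast_nonneg m
    have h2 := Real.log_natCast_nonneg mt
    positivity
  have hupper : A + (1/lam) * ES - B ≤ T * (Real.log m + Real.log mt) / lam := by
    have h := hSopt πW hWmem
    have hEW' : (1/lam) * EW ≤ 0 :=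
      mul_nonpos_of_nonneg_of_nonpos (by positivity) hEWup
    have : A + (1/lam) * ES - B ≤ (1/lam) * EW := by linarith
    calc A + (1/lam) * ES - B ≤ 0 := by linarith
    _ ≤ T * (Real.log m + Real.log mt) / lam := by positivity
  have hlower : -(T * (Real.log m + Real.log mt) / lam) ≤ A + (1/lam) * ES - B := by
    have hBA : B ≤ A := hWopt πS hSmem
    have h2 : (1/lam) * (-(T * (Real.log m + Real.log mt))) ≤ (1/lam) * ES :=
      mul_le_mul_of_nonneg_left hESlow (by positivity)
    have heq : (1/lam) * (-(T * (Real.log m + Real.log mt)))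
        = -(T * (Real.log m + Real.log mt) / lam) := by
      field_simp
    rw [heq] at h2
    linarith
  exact ⟨hupper, abs_le.mpr ⟨hlower, hupper⟩⟩
end
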